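/- Let p, d ∈ ℝ² with p ≠ d and let 0 < U < 1. Then there exists a point e ∈ ℝ² with ℓ(d, e) = U·ℓ(p, d) and ∠(d, p, e) = arcsin U. -/

import Mathlib

open Real EuclideanGeometry
open scoped RealInnerProductSpace

theorem stmt_8 (p d : EuclideanSpace ℝ (Fin 2)) (hpd : p ≠ d)
    (U : ℝ) (hU0 : 0 < U) (hU1 : U < 1) :
    ∃ e : EuclideanSpace ℝ (Fin 2),
      dist d e = U * dist p d ∧
        EuclideanGeometry.angle d p e = Real.arcsin U := by
  set v : EuclideanSpace ℝ (Fin 2) := d - p with hv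
  have hvne : v ≠ 0 := sub_ne_zero.mpr (Ne.symm hpd)
  set r : ℝ := ‖v‖ with hr
  have hrpos : 0 < r := norm_pos_iff.mpr hvne
  set w : EuclideanSpace ℝ (Fin 2) := WithLp.toLp 2 ![-(v 1), v 0] with hw
  have hvw : (inner ℝ (v) (w) : ℝ) = 0 := by
    simp [hw, PiLp.inner_apply, Fin.sum_univ_two, RCLike.inner_apply]
    ring
  have hww : (inner ℝ (w) (w) : ℝ) = (inner ℝ (v) (v) : ℝ) := by
    rw [hw, PiLp.inner_apply, PiLp.inner_apply]
    simp [Fin.sum_univ_two, RCLike.inner_apply]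
    ring
  have hwnorm : ‖w‖ = r := by
    rw [hr, ← Real.sqrt_sq (norm_nonneg w), ← Real.sqrt_sq (norm_nonneg v)]
    rw [← real_inner_self_eq_norm_sq, ← real_inner_self_eq_norm_sq, hww]
  set θ : ℝ := Real.arcsin U with hθ
  have hs : Real.sin θ = U := Real.sin_arcsin (by linarith) (by linarith)
  set c : ℝ := Real.cos θ with hc
  have hcpos : 0 < c := by
    rw [hc, Real.cos_arcsin]
    exact Real.sqrt_pos.mpr (by nlinarith)
  have hcs : c ^ 2 + U ^ 2 = 1 := by
    rw [hc, ← hs]; exact Real.cos_sq_add_sin_sq θ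
  have hwv : (inner ℝ w v : ℝ) = 0 := by rw [real_inner_comm]; exact hvw
  have hvv : (inner ℝ v v : ℝ) = r ^ 2 := by rw [real_inner_self_eq_norm_sq, hr]
  have hww2 : (inner ℝ w w : ℝ) = r ^ 2 := by rw [hww]; exact hvv
  refine ⟨p + (c * c) • v + (c * U) • w, ?_, ?_⟩
  · have he : (p + (c * c) • v + (c * U) • w) - d = (c * c - 1) • v + (c * U) • w := by
      rw [hv]; module
    have hinner : (inner ℝ ((c * c - 1) • v + (c * U) • w) ((c * c - 1) • v + (c * U) • w) : ℝ)
        = (U * r) ^ 2 := by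
      rw [inner_add_add_self]
      simp only [real_inner_smul_left, real_inner_smul_right, hvw, hwv, hvv, hww2]
      linear_combination (r ^ 2 * (c ^ 2 - 1)) * hcs
    have : dist d (p + (c * c) • v + (c * U) • w) = U * r := by
      rw [dist_comm, dist_eq_norm, he, ← Real.sqrt_sq (norm_nonneg _),
        ← real_inner_self_eq_norm_sq, hinner]
      exact Real.sqrt_sq (by positivity)
    rw [this, dist_eq_norm, norm_sub_rev]
  · have he : (p + (c * c) • v + (c * U) • w) - p = (c * c) • v + (c * U) • w := by
      module
    have hip : (inner ℝ (v) ((c * c) • v + (c * U) • w) : ℝ) = c ^ 2 * r ^ 2 := by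
      rw [inner_add_right, real_inner_smul_right, real_inner_smul_right, hvw,
        real_inner_self_eq_norm_sq]
      ring
    have hnorm2 : (inner ℝ ((c * c) • v + (c * U) • w) ((c * c) • v + (c * U) • w) : ℝ) = (c * r) ^ 2 := by
      rw [inner_add_add_self]
      simp only [real_inner_smul_left, real_inner_smul_right, hvw, hwv, hvv, hww2]
      linear_combination (c ^ 2 * r ^ 2) * hcs
    have hnorm : ‖(c * c) • v + (c * U) • w‖ = c * r := by
      rw [← Real.sqrt_sq (norm_nonneg _), ← real_inner_self_eq_norm_sq, hnorm2]
      exact Real.sqrt_sq (by positivity)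
    rw [EuclideanGeometry.angle, show (d -ᵥ p : EuclideanSpace ℝ (Fin 2)) = v from rfl,
      show ((p + (c * c) • v + (c * U) • w) -ᵥ p : EuclideanSpace ℝ (Fin 2))
        = (c * c) • v + (c * U) • w from ?_]
    · rw [InnerProductGeometry.angle, hip, hnorm]
      have : c ^ 2 * r ^ 2 / (r * (c * r)) = c := by
        field_simp
      rw [this, hc]
      exact Real.arccos_cos (by
        have := Real.arcsin_nonneg.mpr (le_of_lt hU0); linarith)
        (by linarith [Real.arcsin_le_pi_div_two U, Real.pi_pos])
    · show (p + (c * c) • v + (c * U) • w) - p = _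
      module
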